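/- Under the gradient-flow setup with the KL assumption, the restricted injectivity assumption on B̄(θ₀, R), and the initialization condition, there exists θ∞ ∈ ℝ^p such that θ(t) → θ∞ as t → ∞, L(F(g(θ∞))) = 0 (so θ∞ is a global minimizer of L∘F∘g), and ‖θ(t) − θ∞‖ ≤ (2/(σ₀·σ_F))·ψ(L(y(t))) for every t ≥ 0. -/

import Mathlib

open Filter MeasureTheory ProbabilityTheory InnerProductSpace Set
open scoped Topology NNReal

noncomputable def sigmaMin {E F : Type*} [NormedAddCommGroup E] [InnerProductSpace ℝ E]
    [CompleteSpace E] [NormedAddCommGroup F] [InnerProductSpace ℝ F] [CompleteSpace F]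
    (A : E →L[ℝ] F) : ℝ :=
  ⨅ w : {w : F // ‖w‖ = 1}, ‖ContinuousLinearMap.adjoint A w.1‖

lemma aux_fderiv_inner {E : Type*} [NormedAddCommGroup E] [InnerProductSpace ℝ E]
    [CompleteSpace E] (f : E → ℝ) (x y : E) :
    fderiv ℝ f x y = @inner ℝ _ _ (gradient f x) y := by
  have h : toDual ℝ E (gradient f x) = fderiv ℝ f x :=
    (toDual ℝ E).apply_symm_apply _
  rw [← h, toDual_apply_apply]

lemma aux_gradient_comp {E E' : Type*} [NormedAddCommGroup E] [InnerProductSpace ℝ E]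
    [CompleteSpace E] [NormedAddCommGroup E'] [InnerProductSpace ℝ E'] [CompleteSpace E']
    (G : E → E') (φ : E' → ℝ) (q : E) (hG : DifferentiableAt ℝ G q)
    (hφ : DifferentiableAt ℝ φ (G q)) :
    gradient (fun x => φ (G x)) q =
      ContinuousLinearMap.adjoint (fderiv ℝ G q) (gradient φ (G q)) := by
  apply ext_inner_right ℝ
  intro y
  rw [← aux_fderiv_inner, ContinuousLinearMap.adjoint_inner_left, ← aux_fderiv_inner]
  have : fderiv ℝ (fun x => φ (G x)) q = (fderiv ℝ φ (G q)).comp (fderiv ℝ G q) :=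
    fderiv_comp q hφ hG
  rw [this]; rfl

lemma aux_sigmaMin_le {E F : Type*} [NormedAddCommGroup E] [InnerProductSpace ℝ E]
    [CompleteSpace E] [NormedAddCommGroup F] [InnerProductSpace ℝ F] [CompleteSpace F]
    (A : E →L[ℝ] F) (w : F) :
    sigmaMin A * ‖w‖ ≤ ‖ContinuousLinearMap.adjoint A w‖ := by
  rcases eq_or_ne w 0 with rfl | hw
  · simp
  · have hnw : ‖w‖ ≠ 0 := norm_ne_zero_iff.2 hw
    have hbdd : BddBelow (Set.range fun w : {w : F // ‖w‖ = 1} =>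
        ‖ContinuousLinearMap.adjoint A w.1‖) := ⟨0, by rintro _ ⟨i, rfl⟩; exact norm_nonneg _⟩
    have h1 : sigmaMin A ≤ ‖ContinuousLinearMap.adjoint A (‖w‖⁻¹ • w)‖ :=
      ciInf_le hbdd (⟨‖w‖⁻¹ • w, norm_smul_inv_norm hw⟩ : {w : F // ‖w‖ = 1})
    rw [_root_.map_smul, norm_smul, norm_inv, norm_norm] at h1
    have h2 := mul_le_mul_of_nonneg_right h1 (norm_nonneg w)
    calc sigmaMin A * ‖w‖ ≤ ‖w‖⁻¹ * ‖ContinuousLinearMap.adjoint A w‖ * ‖w‖ := h2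
    _ = ‖ContinuousLinearMap.adjoint A w‖ := by field_simp

set_option maxHeartbeats 2000000 in
theorem stmt5
    {n m p : ℕ} (hn : 0 < n) (hm : 0 < m) (hp : 0 < p)
    (L : EuclideanSpace ℝ (Fin m) → ℝ)
    (F : EuclideanSpace ℝ (Fin n) → EuclideanSpace ℝ (Fin m))
    (g : EuclideanSpace ℝ (Fin p) → EuclideanSpace ℝ (Fin n))
    (hL : ContDiff ℝ 1 L)
    (hLnonneg : ∀ v, 0 ≤ L v) (hLmin : ∃ v, L v = 0)
    (hLgrad : ∀ s : Set (EuclideanSpace ℝ (Fin m)), Bornology.IsBounded s →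
      ∃ K : ℝ≥0, LipschitzOnWith K (fun v => gradient L v) s)
    (hF : ContDiff ℝ 1 F)
    (hJF : ∀ s : Set (EuclideanSpace ℝ (Fin n)), Bornology.IsBounded s →
      ∃ K : ℝ≥0, LipschitzOnWith K (fun x => fderiv ℝ F x) s)
    (hg : ContDiff ℝ 1 g)
    (hJg : ∀ s : Set (EuclideanSpace ℝ (Fin p)), Bornology.IsBounded s →
      ∃ K : ℝ≥0, LipschitzOnWith K (fun q => fderiv ℝ g q) s)
    (θ θ' : ℝ → EuclideanSpace ℝ (Fin p)) (θ₀ : EuclideanSpace ℝ (Fin p))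
    (hθ0 : θ 0 = θ₀)
    (hθd : ∀ t ≥ (0:ℝ), HasDerivAt θ (θ' t) t)
    (hθcont : ContinuousOn θ' (Set.Ici 0))
    (hflow : ∀ t ≥ (0:ℝ), θ' t = -gradient (fun q => L (F (g q))) (θ t))
    (r₀ : ℝ) (hr₀ : L (F (g (θ 0))) < r₀)
    (ψ ψ' : ℝ → ℝ) (hψ0 : ψ 0 = 0)
    (hψcont : ContinuousOn ψ (Set.Ico 0 r₀))
    (hψmono : StrictMonoOn ψ (Set.Ico 0 r₀))
    (hψd : ∀ s ∈ Set.Ioo (0:ℝ) r₀, HasDerivAt ψ (ψ' s) s)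
    (hKL : ∀ v : EuclideanSpace ℝ (Fin m), 0 < L v → L v < r₀ →
      1 ≤ ψ' (L v) * ‖gradient L v‖)
    (σF : ℝ) (hσF : 0 < σF)
    (σ₀ : ℝ) (hσ₀ : σ₀ = sigmaMin (fderiv ℝ g θ₀)) (hσ₀pos : 0 < σ₀)
    (R : ℝ) (hRpos : 0 < R)
    (hinj : ∀ q ∈ Metric.closedBall θ₀ R,
      gradient L (F (g q)) ∈ LinearMap.range (fderiv ℝ F (g q) : EuclideanSpace ℝ (Fin n) →ₗ[ℝ] EuclideanSpace ℝ (Fin m)) ∧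
      ∀ z ∈ LinearMap.range (fderiv ℝ F (g q) : EuclideanSpace ℝ (Fin n) →ₗ[ℝ] EuclideanSpace ℝ (Fin m)),
        σF * ‖z‖ ≤ ‖ContinuousLinearMap.adjoint (fderiv ℝ F (g q)) z‖)
    (hLip : ∀ a ∈ Metric.closedBall θ₀ R, ∀ b ∈ Metric.closedBall θ₀ R,
      ‖fderiv ℝ g a - fderiv ℝ g b‖ ≤ σ₀ / (2 * R) * ‖a - b‖)
    (R' : ℝ) (hRdef : R' = 2 / (σF * σ₀) * ψ (L (F (g θ₀)))) (hRR : R' < R) :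
    ∃ θlim : EuclideanSpace ℝ (Fin p), Tendsto θ atTop (𝓝 θlim) ∧
      L (F (g θlim)) = 0 ∧
      ∀ t ≥ (0:ℝ), ‖θ t - θlim‖ ≤ 2 / (σ₀ * σF) * ψ (L (F (g (θ t)))) := by
  classical
  -- notation
  set f : EuclideanSpace ℝ (Fin p) → ℝ := fun q => L (F (g q)) with hf_def
  set h : ℝ → ℝ := fun t => f (θ t) with hh_def
  set c : ℝ := 2 / (σ₀ * σF) with hc_def
  have hcpos : 0 < c := by positivity
  -- differentiability
  have hLd : Differentiable ℝ L := hL.differentiable one_ne_zero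
  have hFd : Differentiable ℝ F := hF.differentiable one_ne_zero
  have hgd : Differentiable ℝ g := hg.differentiable one_ne_zero
  have hfC : ContDiff ℝ 1 f := hL.comp (hF.comp hg)
  have hfd : Differentiable ℝ f := hfC.differentiable one_ne_zero
  -- gradient chain rule
  have hgradf : ∀ q, gradient f q = ContinuousLinearMap.adjoint (fderiv ℝ g q)
      (ContinuousLinearMap.adjoint (fderiv ℝ F (g q)) (gradient L (F (g q)))) := by
    intro q
    have h1 : gradient f q = ContinuousLinearMap.adjoint (fderiv ℝ g q)
        (gradient (fun x => L (F x)) (g q)) :=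
      aux_gradient_comp g (fun x => L (F x)) q (hgd q) ((hLd _).comp _ (hFd _))
    have h2 : gradient (fun x => L (F x)) (g q) =
        ContinuousLinearMap.adjoint (fderiv ℝ F (g q)) (gradient L (F (g q))) :=
      aux_gradient_comp F L (g q) (hFd _) (hLd _)
    rw [h1, h2]
  -- derivative of h
  have hhd : ∀ t, 0 ≤ t → HasDerivAt h (-‖gradient f (θ t)‖ ^ 2) t := by
    intro t ht
    have h1 : HasDerivAt h (fderiv ℝ f (θ t) (θ' t)) t :=
      (hfd (θ t)).hasFDerivAt.comp_hasDerivAt t (hθd t ht)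
    have h2 : fderiv ℝ f (θ t) (θ' t) = -‖gradient f (θ t)‖ ^ 2 := by
      rw [aux_fderiv_inner, hflow t ht, inner_neg_right, real_inner_self_eq_norm_sq]
    rwa [h2] at h1
  -- continuity of θ and h
  have hθc : ∀ t, 0 ≤ t → ContinuousAt θ t := fun t ht => (hθd t ht).continuousAt
  have hhc : ∀ t, 0 ≤ t → ContinuousAt h t := fun t ht =>
    (hfd.continuous.continuousAt).comp (hθc t ht)
  -- h is antitone on [0, ∞)
  have hanti : AntitoneOn h (Ici 0) := by
    apply antitoneOn_of_hasDerivWithinAt_nonpos (convex_Ici 0)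
      (fun t ht => (hhc t ht).continuousWithinAt)
      (f' := fun t => -‖gradient f (θ t)‖ ^ 2)
    · intro t ht
      rw [interior_Ici] at ht
      exact ((hhd t (le_of_lt ht)).hasDerivWithinAt)
    · intro t ht
      rw [interior_Ici] at ht
      exact neg_nonpos.2 (by positivity)
  -- basic bounds on h
  have hr0pos : 0 < r₀ := lt_of_le_of_lt (hLnonneg _) hr₀
  have hhnn : ∀ t, 0 ≤ h t := fun t => hLnonneg _
  have hhle : ∀ t, 0 ≤ t → h t ≤ h 0 := fun t ht =>
    hanti (self_mem_Ici) ht ht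
  have hh0r : h 0 < r₀ := hr₀
  have hhr : ∀ t, 0 ≤ t → h t < r₀ := fun t ht => lt_of_le_of_lt (hhle t ht) hh0r
  -- ψ is nonnegative on [0, r₀)
  have hψnn : ∀ x, 0 ≤ x → x < r₀ → 0 ≤ ψ x := by
    intro x hx hxr
    rcases eq_or_lt_of_le hx with rfl | hx'
    · exact le_of_eq hψ0.symm
    · exact le_of_lt (hψ0 ▸ hψmono ⟨le_rfl, hr0pos⟩ ⟨hx, hxr⟩ hx')
  -- lower bound for the adjoint of J_g on the ball
  have hJgq : ∀ q ∈ Metric.closedBall θ₀ R, ∀ w,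
      σ₀ / 2 * ‖w‖ ≤ ‖ContinuousLinearMap.adjoint (fderiv ℝ g q) w‖ := by
    intro q hq w
    have h0 : σ₀ * ‖w‖ ≤ ‖ContinuousLinearMap.adjoint (fderiv ℝ g θ₀) w‖ := by
      rw [hσ₀]; exact aux_sigmaMin_le _ w
    have hdiff : ‖ContinuousLinearMap.adjoint (fderiv ℝ g q) w -
        ContinuousLinearMap.adjoint (fderiv ℝ g θ₀) w‖ ≤ σ₀ / 2 * ‖w‖ := by
      have e1 : ContinuousLinearMap.adjoint (fderiv ℝ g q) w -
          ContinuousLinearMap.adjoint (fderiv ℝ g θ₀) w =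
          (ContinuousLinearMap.adjoint (fderiv ℝ g q - fderiv ℝ g θ₀)) w := by
        rw [map_sub]; rfl
      rw [e1]
      have e2 : ‖ContinuousLinearMap.adjoint (fderiv ℝ g q - fderiv ℝ g θ₀)‖ =
          ‖fderiv ℝ g q - fderiv ℝ g θ₀‖ := LinearIsometryEquiv.norm_map ContinuousLinearMap.adjoint _
      calc ‖(ContinuousLinearMap.adjoint (fderiv ℝ g q - fderiv ℝ g θ₀)) w‖
          ≤ ‖ContinuousLinearMap.adjoint (fderiv ℝ g q - fderiv ℝ g θ₀)‖ * ‖w‖ :=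
            ContinuousLinearMap.le_opNorm _ _
        _ = ‖fderiv ℝ g q - fderiv ℝ g θ₀‖ * ‖w‖ := by rw [e2]
        _ ≤ (σ₀ / (2 * R) * ‖q - θ₀‖) * ‖w‖ := by
            apply mul_le_mul_of_nonneg_right _ (norm_nonneg w)
            exact hLip q hq θ₀ (Metric.mem_closedBall_self (le_of_lt hRpos))
        _ ≤ (σ₀ / (2 * R) * R) * ‖w‖ := by
            apply mul_le_mul_of_nonneg_right _ (norm_nonneg w)
            apply mul_le_mul_of_nonneg_left _ (by positivity)
            rw [← dist_eq_norm]
            exact Metric.mem_closedBall.1 hq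
        _ = σ₀ / 2 * ‖w‖ := by field_simp
    have h3 := norm_sub_norm_le (ContinuousLinearMap.adjoint (fderiv ℝ g θ₀) w)
      (ContinuousLinearMap.adjoint (fderiv ℝ g q) w)
    rw [norm_sub_rev] at h3
    linarith
  -- lower bound for the gradient of f on the ball
  have hgradlow : ∀ q ∈ Metric.closedBall θ₀ R,
      σ₀ / 2 * (σF * ‖gradient L (F (g q))‖) ≤ ‖gradient f q‖ := by
    intro q hq
    obtain ⟨hmem, hlow⟩ := hinj q hq
    have h1 : σF * ‖gradient L (F (g q))‖ ≤
        ‖ContinuousLinearMap.adjoint (fderiv ℝ F (g q)) (gradient L (F (g q)))‖ :=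
      hlow _ hmem
    have h2 := hJgq q hq (ContinuousLinearMap.adjoint (fderiv ℝ F (g q)) (gradient L (F (g q))))
    rw [hgradf q]
    calc σ₀ / 2 * (σF * ‖gradient L (F (g q))‖)
        ≤ σ₀ / 2 * ‖ContinuousLinearMap.adjoint (fderiv ℝ F (g q)) (gradient L (F (g q)))‖ :=
          mul_le_mul_of_nonneg_left h1 (by positivity)
      _ ≤ _ := h2
  -- key estimate on segments where h > 0
  have key : ∀ a b : ℝ, 0 ≤ a → a ≤ b →
      (∀ s ∈ Icc a b, θ s ∈ Metric.closedBall θ₀ R) →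
      (∀ s ∈ Ico a b, 0 < h s) →
      ‖θ b - θ a‖ ≤ c * (ψ (h a) - ψ (h b)) := by
    intro a b ha hab hball hpos
    have hθCont : ContinuousOn θ (Icc a b) := fun s hs =>
      (hθc s (le_trans ha hs.1)).continuousWithinAt
    have hhContOn : ContinuousOn h (Icc a b) := fun s hs =>
      (hhc s (le_trans ha hs.1)).continuousWithinAt
    have hψh : ContinuousOn (fun t => ψ (h t)) (Icc a b) :=
      hψcont.comp hhContOn (fun s hs => ⟨hhnn _, hhr s (le_trans ha hs.1)⟩)
    have conc : ∀ x ∈ Icc a b, ‖θ x - θ a‖ ≤ c * (ψ (h a) - ψ (h x)) := by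
      intro x hx
      refine image_norm_le_of_norm_deriv_right_le_deriv_boundary'
        (f := fun t => θ t - θ a) (f' := θ')
        (B := fun t => c * (ψ (h a) - ψ (h t)))
        (B' := fun t => c * (ψ' (h t) * ‖gradient f (θ t)‖ ^ 2))
        (hθCont.sub continuousOn_const) ?_ (by simp) ?_ ?_ ?_ hx
      · intro u hu
        exact ((hθd u (le_trans ha hu.1)).sub_const _).hasDerivWithinAt
      · exact continuousOn_const.mul (continuousOn_const.sub hψh)
      · intro u hu
        have hu0 : 0 ≤ u := le_trans ha hu.1
        have hdψh : HasDerivAt (fun t => ψ (h t))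
            (ψ' (h u) * (-‖gradient f (θ u)‖ ^ 2)) u :=
          (hψd (h u) ⟨hpos u hu, hhr u hu0⟩).comp u (hhd u hu0)
        have hd2 : HasDerivAt (fun t => c * (ψ (h a) - ψ (h t)))
            (c * (0 - ψ' (h u) * (-‖gradient f (θ u)‖ ^ 2))) u :=
          ((hasDerivAt_const u (ψ (h a))).sub hdψh).const_mul c
        have he : c * (0 - ψ' (h u) * (-‖gradient f (θ u)‖ ^ 2)) =
            c * (ψ' (h u) * ‖gradient f (θ u)‖ ^ 2) := by ring
        rw [he] at hd2
        exact hd2.hasDerivWithinAt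
      · intro u hu
        have hu0 : 0 ≤ u := le_trans ha hu.1
        rw [hflow u hu0, norm_neg]
        have hKLx : 1 ≤ ψ' (h u) * ‖gradient L (F (g (θ u)))‖ :=
          hKL (F (g (θ u))) (hpos u hu) (hhr u hu0)
        have hGZ : σ₀ / 2 * (σF * ‖gradient L (F (g (θ u)))‖) ≤ ‖gradient f (θ u)‖ :=
          hgradlow (θ u) (hball u (Ico_subset_Icc_self hu))
        set G := ‖gradient f (θ u)‖ with hG
        set Z := ‖gradient L (F (g (θ u)))‖ with hZ
        set P := ψ' (h u) with hP
        have hZnn : 0 ≤ Z := norm_nonneg _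
        have hGnn : 0 ≤ G := norm_nonneg _
        have hZpos : 0 < Z := by
          rcases eq_or_lt_of_le hZnn with he | hlt
          · rw [← he, mul_zero] at hKLx; linarith
          · exact hlt
        have hPpos : 0 < P := by nlinarith
        have hGpos : 0 < G := lt_of_lt_of_le (by positivity) hGZ
        show G ≤ c * (P * G ^ 2)
        rw [hc_def, div_mul_eq_mul_div, le_div_iff₀ (by positivity)]
        nlinarith [mul_le_mul_of_nonneg_left hGZ (mul_nonneg hPpos.le hGnn),
          mul_le_mul_of_nonneg_right hKLx
            (mul_nonneg (mul_nonneg (by positivity : (0:ℝ) ≤ σ₀ * σF / 2) hGnn) hGnn)]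
    exact conc b ⟨hab, le_rfl⟩
  -- flat regions: once h hits 0, θ stays constant
  have hflat : ∀ s t : ℝ, 0 ≤ s → s ≤ t → h s = 0 → θ t = θ s ∧ h t = 0 := by
    intro s t hs hst hzero
    have hall : ∀ u ∈ Icc s t, h u = 0 := fun u hu =>
      le_antisymm (hzero ▸ hanti hs (le_trans hs hu.1) hu.1) (hhnn u)
    have hder0 : ∀ u ∈ Icc s t, θ' u = 0 := by
      intro u hu
      have hu0 : 0 ≤ u := le_trans hs hu.1
      have hLu : L (F (g (θ u))) = 0 := hall u hu
      have hmin : IsLocalMin L (F (g (θ u))) :=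
        Filter.Eventually.of_forall (fun w => by rw [hLu]; exact hLnonneg w)
      have hfd0 : fderiv ℝ L (F (g (θ u))) = 0 := hmin.fderiv_eq_zero
      have hgrad0 : gradient L (F (g (θ u))) = 0 := by
        unfold gradient
        rw [hfd0, map_zero]
      rw [hflow u hu0, hgradf, hgrad0, map_zero, map_zero, neg_zero]
    have hconst : ∀ x ∈ Icc s t, θ x = θ s := by
      apply constant_of_has_deriv_right_zero
        (fun u hu => (hθc u (le_trans hs hu.1)).continuousWithinAt)
      intro u hu
      have := (hθd u (le_trans hs hu.1)).hasDerivWithinAt (s := Ici u)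
      rwa [hder0 u (Ico_subset_Icc_self hu)] at this
    exact ⟨hconst t ⟨hst, le_rfl⟩, hall t ⟨hst, le_rfl⟩⟩
  -- full segment estimate assuming containment in the ball
  have est : ∀ a b : ℝ, 0 ≤ a → a ≤ b →
      (∀ s ∈ Icc a b, θ s ∈ Metric.closedBall θ₀ R) →
      ‖θ b - θ a‖ ≤ c * (ψ (h a) - ψ (h b)) := by
    intro a b ha hab hball
    rcases eq_or_lt_of_le (hhnn b) with hb0 | hbpos
    · by_cases ha0 : h a = 0
      · obtain ⟨hconst, _⟩ := hflat a b ha hab ha0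
        rw [hconst, sub_self, norm_zero, ha0, ← hb0, sub_self, mul_zero]
      · have hapos : 0 < h a := lt_of_le_of_ne (hhnn a) (Ne.symm ha0)
        set Z := {u : ℝ | u ∈ Icc a b ∧ h u = 0} with hZdef
        have hbZ : b ∈ Z := ⟨⟨hab, le_rfl⟩, hb0.symm⟩
        have hZne : Z.Nonempty := ⟨b, hbZ⟩
        have hZbdd : BddBelow Z := ⟨a, fun u hu => hu.1.1⟩
        set τ := sInf Z with hτdef
        have hτge : a ≤ τ := le_csInf hZne (fun u hu => hu.1.1)
        have hτle : τ ≤ b := csInf_le hZbdd hbZ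
        have hτ0 : 0 ≤ τ := le_trans ha hτge
        have hhτ : h τ = 0 := by
          by_contra hne
          have hposτ : 0 < h τ := lt_of_le_of_ne (hhnn τ) (Ne.symm hne)
          have hev : ∀ᶠ u in 𝓝 τ, 0 < h u :=
            (hhc τ hτ0).eventually (eventually_gt_nhds hposτ)
          obtain ⟨ε, hε, hballε⟩ := Metric.eventually_nhds_iff.1 hev
          obtain ⟨z, hzZ, hz⟩ := (csInf_lt_iff hZbdd hZne).1
            (show sInf Z < τ + ε by rw [← hτdef]; linarith)
          have hzge : τ ≤ z := csInf_le hZbdd hzZ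
          have : dist z τ < ε := by
            rw [Real.dist_eq, abs_of_nonneg (by linarith)]; linarith
          exact absurd hzZ.2 (ne_of_gt (hballε this))
        obtain ⟨hconst, _⟩ := hflat τ b hτ0 hτle hhτ
        have hstep := key a τ ha hτge
          (fun s hs => hball s ⟨hs.1, le_trans hs.2 hτle⟩)
          (fun s hs => by
            by_contra hc2
            push_neg at hc2
            have hs0 : h s = 0 := le_antisymm hc2 (hhnn s)
            have : τ ≤ s := csInf_le hZbdd ⟨⟨hs.1, le_trans hs.2.le hτle⟩, hs0⟩
            exact absurd hs.2 (not_lt.2 this))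
        rw [hconst]
        calc ‖θ τ - θ a‖ ≤ c * (ψ (h a) - ψ (h τ)) := hstep
          _ = c * (ψ (h a) - ψ (h b)) := by rw [hhτ, ← hb0]
    · apply key a b ha hab hball
      intro s hs
      exact lt_of_lt_of_le hbpos (hanti (le_trans ha hs.1) (le_trans ha hab) hs.2.le)
  -- value of R'
  have hh0val : h 0 = L (F (g θ₀)) := by simp only [hh_def, hf_def]; rw [hθ0]
  have hR'c : R' = c * ψ (h 0) := by
    rw [hh0val, hRdef, hc_def, mul_comm σF σ₀]
  have hψh0nn : 0 ≤ ψ (h 0) := hψnn _ (hhnn 0) hh0r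
  have hR'nn : 0 ≤ R' := by rw [hR'c]; positivity
  -- the trajectory stays in the ball of radius R
  have hR : ∀ t, 0 ≤ t → ‖θ t - θ₀‖ ≤ R := by
    by_contra hcon
    push_neg at hcon
    obtain ⟨t₁, ht₁0, ht₁⟩ := hcon
    set B : Set ℝ := {t : ℝ | 0 ≤ t ∧ R < ‖θ t - θ₀‖} with hBdef
    have hBne : B.Nonempty := ⟨t₁, ht₁0, ht₁⟩
    have hBbdd : BddBelow B := ⟨0, fun u hu => hu.1⟩
    set τ := sInf B with hτdef
    have hτ0 : 0 ≤ τ := le_csInf hBne (fun u hu => hu.1)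
    have hτR : R ≤ ‖θ τ - θ₀‖ := by
      by_contra hne
      push_neg at hne
      have hev : ∀ᶠ u in 𝓝 τ, ‖θ u - θ₀‖ < R :=
        (((hθc τ hτ0).sub continuousAt_const).norm).eventually (eventually_lt_nhds hne)
      obtain ⟨ε, hε, hballε⟩ := Metric.eventually_nhds_iff.1 hev
      obtain ⟨z, hzB, hz⟩ := (csInf_lt_iff hBbdd hBne).1
        (show sInf B < τ + ε by rw [← hτdef]; linarith)
      have hzge : τ ≤ z := csInf_le hBbdd hzB
      have : dist z τ < ε := by
        rw [Real.dist_eq, abs_of_nonneg (by linarith)]; linarith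
      exact absurd (hballε this) (not_lt.2 hzB.2.le)
    have hτpos : 0 < τ := by
      rcases eq_or_lt_of_le hτ0 with he | hlt
      · exfalso
        rw [← he, hθ0, sub_self, norm_zero] at hτR
        linarith
      · exact hlt
    have hless : ∀ s, 0 ≤ s → s < τ → ‖θ s - θ₀‖ ≤ R := by
      intro s hs0 hsτ
      by_contra hgt
      push_neg at hgt
      exact absurd (csInf_le hBbdd ⟨hs0, hgt⟩) (not_le.2 hsτ)
    have hτR2 : ‖θ τ - θ₀‖ ≤ R := by
      have htd : Tendsto (fun s => ‖θ s - θ₀‖) (𝓝[<] τ) (𝓝 ‖θ τ - θ₀‖) :=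
        (((hθc τ hτ0).sub continuousAt_const).norm).continuousWithinAt.tendsto
      apply le_of_tendsto htd
      filter_upwards [Ioo_mem_nhdsLT_of_mem (show τ ∈ Ioc (0:ℝ) τ from ⟨hτpos, le_rfl⟩)]
      intro s hs
      exact hless s hs.1.le hs.2
    have hballτ : ∀ s ∈ Icc (0:ℝ) τ, θ s ∈ Metric.closedBall θ₀ R := by
      intro s hs
      rw [Metric.mem_closedBall, dist_eq_norm]
      rcases lt_or_eq_of_le hs.2 with hlt | he
      · exact hless s hs.1 hlt
      · rw [he]; exact hτR2
    have hcontra := est 0 τ le_rfl hτ0 hballτ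
    rw [hθ0] at hcontra
    have hψτnn : 0 ≤ ψ (h τ) := hψnn _ (hhnn τ) (hhr τ hτ0)
    have : ‖θ τ - θ₀‖ ≤ R' := by
      rw [hR'c]
      nlinarith
    linarith
  have hballmem : ∀ t, 0 ≤ t → θ t ∈ Metric.closedBall θ₀ R := by
    intro t ht
    rw [Metric.mem_closedBall, dist_eq_norm]
    exact hR t ht
  -- unconditional estimate
  have hest : ∀ a b : ℝ, 0 ≤ a → a ≤ b → ‖θ b - θ a‖ ≤ c * (ψ (h a) - ψ (h b)) :=
    fun a b ha hab => est a b ha hab (fun s hs => hballmem s (le_trans ha hs.1))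
  have hRfin : ∀ t, 0 ≤ t → ‖θ t - θ₀‖ ≤ R' := by
    intro t ht
    have := hest 0 t le_rfl ht
    rw [hθ0] at this
    have hψτnn : 0 ≤ ψ (h t) := hψnn _ (hhnn t) (hhr t ht)
    rw [hR'c]
    nlinarith
  -- ψ ∘ h is antitone and nonneg
  have hφanti : ∀ s t : ℝ, 0 ≤ s → s ≤ t → ψ (h t) ≤ ψ (h s) := by
    intro s t hs hst
    have h1 := hest s t hs hst
    nlinarith [norm_nonneg (θ t - θ s)]
  have hφnn : ∀ t, 0 ≤ t → 0 ≤ ψ (h t) := fun t ht => hψnn _ (hhnn t) (hhr t ht)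
  -- limit of ψ (h n) along ℕ
  have hseqanti : Antitone (fun n : ℕ => ψ (h n)) := fun i j hij =>
    hφanti i j (Nat.cast_nonneg i) (Nat.cast_le.2 hij)
  have hbddb : BddBelow (Set.range fun n : ℕ => ψ (h n)) :=
    ⟨0, by rintro _ ⟨i, rfl⟩; exact hφnn i (Nat.cast_nonneg i)⟩
  set l : ℝ := ⨅ n : ℕ, ψ (h n) with hl_def
  have hltend : Tendsto (fun n : ℕ => ψ (h n)) atTop (𝓝 l) :=
    tendsto_atTop_ciInf hseqanti hbddb
  have hlle : ∀ n : ℕ, l ≤ ψ (h n) := fun n => ciInf_le hbddb n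
  have hlnn : 0 ≤ l := le_ciInf (fun n => hφnn n (Nat.cast_nonneg n))
  have hlreal : ∀ t : ℝ, 0 ≤ t → l ≤ ψ (h t) := fun t ht =>
    le_trans (hlle ⌈t⌉₊) (hφanti t ⌈t⌉₊ ht (Nat.le_ceil t))
  have htend0 : Tendsto (fun N : ℕ => c * (ψ (h N) - l)) atTop (𝓝 0) := by
    have := (hltend.sub_const l).const_mul c
    simpa using this
  -- Cauchy sequence and limit point
  have hcauchy : CauchySeq (fun n : ℕ => θ n) := by
    apply cauchySeq_of_le_tendsto_0 (b := fun N : ℕ => c * (ψ (h N) - l)) _ htend0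
    intro a b N ha hb
    have key2 : ∀ x y : ℕ, N ≤ x → x ≤ y → dist (θ x) (θ y) ≤ c * (ψ (h N) - l) := by
      intro x y hx hxy
      have h1 := hest x y (Nat.cast_nonneg x) (Nat.cast_le.2 hxy)
      have h2 : ψ (h x) ≤ ψ (h N) := hφanti N x (Nat.cast_nonneg N) (Nat.cast_le.2 hx)
      have h3 : l ≤ ψ (h y) := hlle y
      rw [dist_eq_norm, norm_sub_rev]
      calc ‖θ y - θ x‖ ≤ c * (ψ (h x) - ψ (h y)) := h1
        _ ≤ c * (ψ (h N) - l) := by nlinarith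
    rcases le_total a b with hab | hab
    · exact key2 a b ha hab
    · rw [dist_comm]; exact key2 b a hb hab
  obtain ⟨θlim, hθlim⟩ := cauchySeq_tendsto_of_complete hcauchy
  -- the quantitative bound
  have hbound : ∀ t : ℝ, 0 ≤ t → ‖θ t - θlim‖ ≤ c * (ψ (h t) - l) := by
    intro t ht
    have h1 : Tendsto (fun n : ℕ => ‖θ t - θ n‖) atTop (𝓝 ‖θ t - θlim‖) :=
      (tendsto_const_nhds.sub hθlim).norm
    have h2 : Tendsto (fun n : ℕ => c * (ψ (h t) - ψ (h n))) atTop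
        (𝓝 (c * (ψ (h t) - l))) := (tendsto_const_nhds.sub hltend).const_mul c
    apply le_of_tendsto_of_tendsto h1 h2
    filter_upwards [eventually_ge_atTop ⌈t⌉₊]
    intro n hn
    rw [norm_sub_rev]
    exact hest t n ht (le_trans (Nat.le_ceil t) (Nat.cast_le.2 hn))
  -- convergence of θ at infinity
  have hθtendsto : Tendsto θ atTop (𝓝 θlim) := by
    rw [Metric.tendsto_atTop]
    intro ε hε
    have hev1 : ∀ᶠ N : ℕ in atTop, c * (ψ (h N) - l) < ε / 2 :=
      htend0.eventually (eventually_lt_nhds (by linarith))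
    have hev2 : ∀ᶠ N : ℕ in atTop, dist (θ N) θlim < ε / 2 := by
      have := hθlim.eventually_mem (Metric.ball_mem_nhds θlim (show (0:ℝ) < ε / 2 by linarith))
      filter_upwards [this] with N hN using Metric.mem_ball.1 hN
    obtain ⟨N, hN1, hN2⟩ := (hev1.and hev2).exists
    refine ⟨N, fun t htN => ?_⟩
    have ht0 : 0 ≤ t := le_trans (Nat.cast_nonneg N) htN
    have hd1 : dist (θ t) (θ N) ≤ c * (ψ (h N) - l) := by
      rw [dist_comm, dist_eq_norm, norm_sub_rev]
      have h1 := hest N t (Nat.cast_nonneg N) htN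
      have h3 : l ≤ ψ (h t) := hlreal t ht0
      calc ‖θ t - θ N‖ ≤ c * (ψ (h N) - ψ (h t)) := h1
        _ ≤ c * (ψ (h N) - l) := by nlinarith
    calc dist (θ t) θlim ≤ dist (θ t) (θ N) + dist (θ N) θlim := dist_triangle _ _ _
      _ < ε / 2 + ε / 2 := by
          apply add_lt_add_of_le_of_lt (le_trans hd1 hN1.le) hN2
      _ = ε := by ring
  -- the limit value of L is zero
  have hfcont : Continuous f := hfd.continuous
  have hhtendinf : Tendsto (fun t : ℝ => h t) atTop (𝓝 (f θlim)) :=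
    (hfcont.tendsto θlim).comp hθtendsto
  have hL0 : f θlim = 0 := by
    by_contra hne
    have hinfpos : 0 < f θlim := lt_of_le_of_ne (hLnonneg _) (Ne.symm hne)
    have hinflt : f θlim < r₀ := by
      have hle : f θlim ≤ h 0 := by
        apply le_of_tendsto hhtendinf
        filter_upwards [eventually_ge_atTop (0:ℝ)] with t ht using hhle t ht
      linarith
    have hmemlim : θlim ∈ Metric.closedBall θ₀ R := by
      rw [Metric.mem_closedBall, dist_eq_norm]
      have htd2 : Tendsto (fun n : ℕ => ‖θ n - θ₀‖) atTop (𝓝 ‖θlim - θ₀‖) :=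
        (hθlim.sub_const θ₀).norm
      have hle2 : ‖θlim - θ₀‖ ≤ R' :=
        le_of_tendsto htd2 (Filter.Eventually.of_forall
          (fun nn => hRfin nn (Nat.cast_nonneg nn)))
      linarith
    have hKLlim : 1 ≤ ψ' (f θlim) * ‖gradient L (F (g θlim))‖ := hKL _ hinfpos hinflt
    have hZlim : 0 < ‖gradient L (F (g θlim))‖ := by
      by_contra hz
      push_neg at hz
      have : ‖gradient L (F (g θlim))‖ = 0 := le_antisymm hz (norm_nonneg _)
      rw [this, mul_zero] at hKLlim
      linarith
    have hδpos : 0 < ‖gradient f θlim‖ :=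
      lt_of_lt_of_le (by positivity) (hgradlow θlim hmemlim)
    set δ : ℝ := ‖gradient f θlim‖ with hδdef
    have hgc : Continuous (gradient f) := by
      unfold gradient
      exact (LinearIsometryEquiv.continuous _).comp (hfC.continuous_fderiv one_ne_zero)
    have htendδ : Tendsto (fun t : ℝ => ‖gradient f (θ t)‖) atTop (𝓝 δ) :=
      ((hgc.tendsto θlim).comp hθtendsto).norm
    obtain ⟨T, hT⟩ := eventually_atTop.1
      (htendδ.eventually (eventually_gt_nhds (half_lt_self hδpos)))
    set T' : ℝ := max T 0 with hT'def
    have hT'0 : 0 ≤ T' := le_max_right _ _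
    set K : ℝ := (δ / 2) ^ 2 with hKdef
    have hKpos : 0 < K := by positivity
    have huanti : AntitoneOn (fun t => h t + K * t) (Ici T') := by
      apply antitoneOn_of_hasDerivWithinAt_nonpos (convex_Ici T')
        (f' := fun t => -‖gradient f (θ t)‖ ^ 2 + K)
      · intro t ht
        have ht0 : 0 ≤ t := le_trans hT'0 ht
        exact ((hhc t ht0).add (continuousAt_const.mul continuousAt_id)).continuousWithinAt
      · intro t ht
        rw [interior_Ici] at ht
        have ht0 : 0 ≤ t := le_trans hT'0 ht.le
        have hd : HasDerivAt (fun t => h t + K * t) (-‖gradient f (θ t)‖ ^ 2 + K) t := by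
          have h2 : HasDerivAt (fun t : ℝ => K * t) K t := by
            simpa using (hasDerivAt_id t).const_mul K
          exact (hhd t ht0).add h2
        exact hd.hasDerivWithinAt
      · intro t ht
        rw [interior_Ici] at ht
        have hTt : T ≤ t := le_trans (le_max_left T 0) ht.le
        have := hT t hTt
        have hsq : K ≤ ‖gradient f (θ t)‖ ^ 2 := by
          rw [hKdef]
          apply pow_le_pow_left₀ (by positivity) this.le
        linarith
    have hdivnn : 0 ≤ (h T' + 1) / K := div_nonneg (by linarith [hhnn T']) hKpos.le
    have hfinal := huanti (self_mem_Ici) (show T' + (h T' + 1) / K ∈ Ici T' by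
      simp only [mem_Ici, le_add_iff_nonneg_right]
      exact hdivnn)
      (by simp only [le_add_iff_nonneg_right]; exact hdivnn)
    have hhig : 0 ≤ h (T' + (h T' + 1) / K) := hhnn _
    have hexp : K * ((h T' + 1) / K) = h T' + 1 := by field_simp
    nlinarith [hfinal]
  refine ⟨θlim, hθtendsto, hL0, ?_⟩
  intro t ht
  show ‖θ t - θlim‖ ≤ c * ψ (h t)
  have h1 := hbound t ht
  have h2 : 0 ≤ c * l := mul_nonneg hcpos.le hlnn
  nlinarith
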